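/- Let G = AB be a finite group with subgroups A, B, let p be a prime, and let A_p ∈ Syl_p(A), B_p ∈ Syl_p(B) be suitably chosen Sylow p-subgroups. Then there exist such choices with A_p B_p a Sylow p-subgroup of G. -/

import Mathlib

open scoped Pointwise


theorem card_mul_mul_card_inf' {G : Type*} [Group G] (H K : Subgroup G) :
    Nat.card (↑H * ↑K : Set G) * Nat.card (H ⊓ K : Subgroup G) =
      Nat.card H * Nat.card K := by
  rw [← Nat.card_prod, ← Nat.card_prod]
  apply Nat.card_congr
  have exdec : ∀ x : (↑H * ↑K : Set G), ∃ hk : G × G,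
      hk.1 ∈ H ∧ hk.2 ∈ K ∧ hk.1 * hk.2 = (x : G) := by
    rintro ⟨x, hx⟩
    obtain ⟨h, hh, k, hk, rfl⟩ := Set.mem_mul.mp hx
    exact ⟨(h, k), hh, hk, rfl⟩
  choose dec h1 h2 h3 using exdec
  refine Equiv.mk
    (fun y => (⟨(dec y.1).1 * (y.2 : G), mul_mem (h1 y.1) (Subgroup.mem_inf.mp y.2.2).1⟩,
      ⟨(y.2 : G)⁻¹ * (dec y.1).2,
        mul_mem (inv_mem (Subgroup.mem_inf.mp y.2.2).2) (h2 y.1)⟩))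
    (fun z => (⟨(z.1 : G) * (z.2 : G), Set.mul_mem_mul z.1.2 z.2.2⟩,
      ⟨(dec ⟨(z.1 : G) * (z.2 : G), Set.mul_mem_mul z.1.2 z.2.2⟩).1⁻¹ * (z.1 : G),
        Subgroup.mem_inf.mpr ⟨mul_mem (inv_mem (h1 _)) z.1.2, by
          have e : (dec ⟨(z.1 : G) * (z.2 : G), Set.mul_mem_mul z.1.2 z.2.2⟩).1 *
              (dec ⟨(z.1 : G) * (z.2 : G), Set.mul_mem_mul z.1.2 z.2.2⟩).2
              = (z.1 : G) * (z.2 : G) :=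
            h3 ⟨(z.1 : G) * (z.2 : G), Set.mul_mem_mul z.1.2 z.2.2⟩
          have e2 : (dec ⟨(z.1 : G) * (z.2 : G), Set.mul_mem_mul z.1.2 z.2.2⟩).1⁻¹ * (z.1 : G)
              = (dec ⟨(z.1 : G) * (z.2 : G), Set.mul_mem_mul z.1.2 z.2.2⟩).2 * (z.2 : G)⁻¹ := by
            rw [inv_mul_eq_iff_eq_mul, ← mul_assoc, e, mul_assoc, mul_inv_cancel, mul_one]
          rw [e2]
          exact mul_mem (h2 _) (inv_mem z.2.2)⟩⟩))
    ?_ ?_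
  · rintro ⟨x, d⟩
    have hx : ((dec x).1 * (d : G)) * ((d : G)⁻¹ * (dec x).2) = (x : G) := by
      rw [mul_assoc, ← mul_assoc (d : G), mul_inv_cancel, one_mul]; exact h3 x
    ext
    · exact hx
    · simp only [hx, Subtype.coe_eta]
      rw [inv_mul_cancel_left]
  · rintro ⟨h, k⟩
    ext
    · simp only
      exact mul_inv_cancel_left _ _
    · simp only
      rw [mul_inv_rev, inv_inv, mul_assoc, h3]
      exact inv_mul_cancel_left _ _

theorem map_subtype_conj_smul' {G : Type*} [Group G] (H : Subgroup G) (x : H) (K : Subgroup H) :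
    Subgroup.map H.subtype (MulAut.conj x • K) =
      MulAut.conj (x : G) • Subgroup.map H.subtype K := by
  ext y
  simp only [Subgroup.mem_map, Subgroup.mem_pointwise_smul_iff_inv_smul_mem, Subgroup.coe_subtype]
  constructor
  · rintro ⟨z, hz, rfl⟩
    exact ⟨_, hz, by simp⟩
  · rintro ⟨w, hw, hwy⟩
    refine ⟨x * w * x⁻¹, by rw [MulAut.smul_def, MulAut.conj_inv_apply, show x⁻¹ * (x * w * x⁻¹) * x = w by group]; exact hw, ?_⟩
    simp only [MulAut.smul_def, MulAut.conj_inv_apply] at hwy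
    simp [hwy, mul_assoc]

/-- Wielandt: in a factorized finite group `G = AB`, Sylow `p`-subgroups `A_p ≤ A`,
`B_p ≤ B` may be chosen so that `A_p B_p` is a Sylow `p`-subgroup of `G`. -/
theorem sylow_of_factorized {G : Type*} [Group G] [Finite G] (A B : Subgroup G)
    (p : ℕ) (hp : p.Prime)
    (hfact : ∀ g : G, ∃ a ∈ A, ∃ b ∈ B, g = a * b) :
    ∃ (P : Sylow p A) (Q : Sylow p B) (R : Sylow p G),
      ((Subgroup.map A.subtype (P : Subgroup A) : Subgroup G) : Set G) *
        ((Subgroup.map B.subtype (Q : Subgroup B) : Subgroup G) : Set G) =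
        ((R : Subgroup G) : Set G) := by
  haveI : Fact p.Prime := ⟨hp⟩
  classical
  obtain ⟨A₀⟩ : Nonempty (Sylow p A) := inferInstance
  obtain ⟨B₀⟩ : Nonempty (Sylow p B) := inferInstance
  set Aim := Subgroup.map A.subtype (A₀ : Subgroup A) with hAim
  set Bim := Subgroup.map B.subtype (B₀ : Subgroup B) with hBim
  obtain ⟨S, hBS⟩ := (B₀.2.map B.subtype).exists_le_sylow
  obtain ⟨T, hAT⟩ := (A₀.2.map A.subtype).exists_le_sylow
  obtain ⟨g, hg⟩ := MulAction.exists_smul_eq G S T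
  obtain ⟨a, ha, b, hb, hgab⟩ := hfact g
  set S₀ : Sylow p G := b • S with hS₀
  set xa : A := ⟨a, ha⟩ with hxa
  set xb : B := ⟨b, hb⟩ with hxb
  refine ⟨xa⁻¹ • A₀, xb • B₀, S₀, ?_⟩
  set K := Subgroup.map A.subtype ((xa⁻¹ • A₀ : Sylow p A) : Subgroup A) with hK
  set L := Subgroup.map B.subtype ((xb • B₀ : Sylow p B) : Subgroup B) with hL
  have hKeq : K = MulAut.conj a⁻¹ • Aim := by
    rw [hK, Sylow.coe_subgroup_smul, map_subtype_conj_smul']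
    congr 1
  have hLeq : L = MulAut.conj b • Bim := by
    rw [hL, Sylow.coe_subgroup_smul, map_subtype_conj_smul']
  have hSG : (S₀ : Subgroup G) = MulAut.conj b • (S : Subgroup G) := Sylow.coe_subgroup_smul
  have hKS : K ≤ (S₀ : Subgroup G) := by
    have h1 : Aim ≤ MulAut.conj g • (S : Subgroup G) := by
      rw [← Sylow.coe_subgroup_smul, hg]; exact hAT
    have h2 : MulAut.conj a⁻¹ • Aim ≤ MulAut.conj a⁻¹ • (MulAut.conj g • (S : Subgroup G)) :=
      (Subgroup.pointwise_smul_le_pointwise_smul_iff).mpr h1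
    rw [hKeq, hSG]
    refine h2.trans (le_of_eq ?_)
    rw [smul_smul, ← map_mul, hgab, inv_mul_cancel_left]
  have hLS : L ≤ (S₀ : Subgroup G) := by
    rw [hLeq, hSG]
    exact (Subgroup.pointwise_smul_le_pointwise_smul_iff).mpr hBS
  -- cardinalities
  have cardmap : ∀ (H : Subgroup G) (W : Subgroup H),
      Nat.card (Subgroup.map H.subtype W) = Nat.card W := fun H W =>
    (Nat.card_congr (Subgroup.equivMapOfInjective W H.subtype H.subtype_injective).toEquiv).symm
  have hKcard : Nat.card K = p ^ (Nat.card A).factorization p := by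
    rw [hK, cardmap]; exact Sylow.card_eq_multiplicity _
  have hLcard : Nat.card L = p ^ (Nat.card B).factorization p := by
    rw [hL, cardmap]; exact Sylow.card_eq_multiplicity _
  have hScard : Nat.card (S₀ : Subgroup G) = p ^ (Nat.card G).factorization p :=
    S₀.card_eq_multiplicity
  have hKp : IsPGroup p K := by
    rw [hK]; exact ((xa⁻¹ • A₀ : Sylow p A).2.map A.subtype)
  have hKL_le : K ⊓ L ≤ A ⊓ B := by
    rw [hK, hL]; exact inf_le_inf (Subgroup.map_subtype_le _) (Subgroup.map_subtype_le _)
  have hKLcard : Nat.card (K ⊓ L : Subgroup G) ≤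
      p ^ (Nat.card (A ⊓ B : Subgroup G)).factorization p := by
    have hpg : IsPGroup p ((K ⊓ L).subgroupOf (A ⊓ B)) :=
      (hKp.to_inf_left).of_equiv (Subgroup.subgroupOfEquivOfLe hKL_le).symm
    obtain ⟨R, hR⟩ := hpg.exists_le_sylow
    calc Nat.card (K ⊓ L : Subgroup G)
        = Nat.card ((K ⊓ L).subgroupOf (A ⊓ B)) :=
          (Nat.card_congr (Subgroup.subgroupOfEquivOfLe hKL_le).toEquiv).symm
      _ ≤ Nat.card (R : Subgroup (A ⊓ B : Subgroup G)) := Subgroup.card_le_of_le hR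
      _ = p ^ (Nat.card (A ⊓ B : Subgroup G)).factorization p := R.card_eq_multiplicity
  have hU : ((A : Set G) * (B : Set G)) = Set.univ := by
    apply Set.eq_univ_of_forall
    intro g'
    obtain ⟨a', ha', b', hb', hg'⟩ := hfact g'
    exact hg' ▸ Set.mul_mem_mul ha' hb'
  have hmaster : Nat.card G * Nat.card (A ⊓ B : Subgroup G) = Nat.card A * Nat.card B := by
    have h := card_mul_mul_card_inf' A B
    rw [hU] at h
    simpa using h
  have hv : (Nat.card G).factorization p + (Nat.card (A ⊓ B : Subgroup G)).factorization p =
      (Nat.card A).factorization p + (Nat.card B).factorization p := by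
    have h0 : (Nat.card G * Nat.card (A ⊓ B : Subgroup G)).factorization =
        (Nat.card A * Nat.card B).factorization := by rw [hmaster]
    rw [Nat.factorization_mul Nat.card_pos.ne' Nat.card_pos.ne',
      Nat.factorization_mul Nat.card_pos.ne' Nat.card_pos.ne'] at h0
    have := DFunLike.congr_fun h0 p
    simpa using this
  have hKLprod := card_mul_mul_card_inf' K L
  have hpos : 0 < Nat.card (K ⊓ L : Subgroup G) := Nat.card_pos
  have hge : Nat.card ((S₀ : Subgroup G) : Set G) ≤ Nat.card (↑K * ↑L : Set G) := by
    have hc1 : Nat.card (↑K * ↑L : Set G) * Nat.card (K ⊓ L : Subgroup G) =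
        p ^ (Nat.card G).factorization p * p ^ (Nat.card (A ⊓ B : Subgroup G)).factorization p := by
      rw [hKLprod, hKcard, hLcard, ← pow_add, ← pow_add, hv]
    have hc2 : Nat.card (S₀ : Subgroup G) * Nat.card (K ⊓ L : Subgroup G) ≤
        Nat.card (↑K * ↑L : Set G) * Nat.card (K ⊓ L : Subgroup G) := by
      rw [hc1, hScard]
      exact Nat.mul_le_mul_left _ hKLcard
    have := Nat.le_of_mul_le_mul_right hc2 hpos
    exact this
  have hsub : (↑K * ↑L : Set G) ⊆ ((S₀ : Subgroup G) : Set G) := by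
    rw [Set.mul_subset_iff]
    exact fun x hx y hy => mul_mem (hKS hx) (hLS hy)
  have := Set.eq_of_subset_of_ncard_le hsub
    (by rw [← Nat.card_coe_set_eq, ← Nat.card_coe_set_eq]; exact hge)
    (Set.toFinite _)
  exact this
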